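/- Let G be a connected finite weighted graph with positive edge weights, and let u and v be two vertices of G such that: the shortest u-v path P = (u = v_0, v_1, ..., v_k = v) in G is unique, and for every vertex x of G there is a unique vertex v_i on P with d_G(x, v_i) = d_G(x, V(P)). For 0 ≤ i ≤ k let V_i = {x ∈ V(G) : d_G(x, v_i) = d_G(x, V(P))} and let G_i = G[V_i] be the induced subgraph (with edge weights inherited from G). Then for each 0 ≤ i ≤ k and every vertex x ∈ V_i, the distance from v_i to x in G_i equals the distance from v_i to x in G: d_{G_i}(v_i, x) = d_G(v_i, x). -/

import Mathlib

open SimpleGraph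

/-- The weighted length of a walk: the sum of the weights of its edges. -/
def SimpleGraph.Walk.wlength {V : Type*} {G : SimpleGraph V} (w : V → V → ℝ) {x y : V}
    (p : G.Walk x y) : ℝ :=
  (p.darts.map fun d => w d.toProd.1 d.toProd.2).sum

/-- The weighted distance between two vertices: the minimum weighted length of a walk. -/
noncomputable def SimpleGraph.wdist {V : Type*} (G : SimpleGraph V) (w : V → V → ℝ)
    (x y : V) : ℝ :=
  sInf {r : ℝ | ∃ p : G.Walk x y, p.wlength w = r}

/-- The weighted distance from a vertex to a set of vertices. -/
noncomputable def SimpleGraph.wdistS {V : Type*} (G : SimpleGraph V) (w : V → V → ℝ)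
    (x : V) (S : Set V) : ℝ :=
  sInf (G.wdist w x '' S)

/-- `Vset G w P i` is the set of vertices whose nearest vertex on the walk `P` is `P.getVert i`,
i.e. `V_i = {x : d_G(x, v_i) = d_G(x, V(P))}`. -/
def Vset {V : Type*} (G : SimpleGraph V) (w : V → V → ℝ) {u v : V} (P : G.Walk u v)
    (i : ℕ) : Set V :=
  {x : V | G.wdist w x (P.getVert i) = G.wdistS w x {z | z ∈ P.support}}

section Aux

variable {V : Type*} {G : SimpleGraph V} {w : V → V → ℝ}

lemma wlength_nil {x : V} : (Walk.nil : G.Walk x x).wlength w = 0 := rfl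

lemma wlength_cons {x y z : V} (h : G.Adj x y) (p : G.Walk y z) :
    (Walk.cons h p).wlength w = w x y + p.wlength w := by
  simp [SimpleGraph.Walk.wlength]

lemma wlength_append {x y z : V} (p : G.Walk x y) (q : G.Walk y z) :
    (p.append q).wlength w = p.wlength w + q.wlength w := by
  simp [SimpleGraph.Walk.wlength, SimpleGraph.Walk.darts_append]

lemma wlength_nonneg (hw : ∀ a b : V, G.Adj a b → 0 ≤ w a b) {x y : V} (p : G.Walk x y) :
    0 ≤ p.wlength w := by
  induction p with
  | nil => simp [wlength_nil]
  | cons h q ih => rw [wlength_cons]; exact add_nonneg (hw _ _ h) ih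

lemma wlength_dropUntil_le [DecidableEq V] (hw : ∀ a b : V, G.Adj a b → 0 ≤ w a b) {x y z : V}
    (p : G.Walk x y) (h : z ∈ p.support) :
    (p.dropUntil z h).wlength w ≤ p.wlength w := by
  conv_rhs => rw [← p.take_spec h]
  rw [wlength_append]
  have := wlength_nonneg (w := w) hw (p.takeUntil z h)
  linarith

lemma wlength_bypass_le [DecidableEq V] (hw : ∀ a b : V, G.Adj a b → 0 ≤ w a b) {x y : V} (p : G.Walk x y) :
    p.bypass.wlength w ≤ p.wlength w := by
  induction p with
  | nil => simp [SimpleGraph.Walk.bypass]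
  | cons h q ih =>
    simp only [SimpleGraph.Walk.bypass]
    split_ifs with hs
    · calc (q.bypass.dropUntil _ hs).wlength w ≤ q.bypass.wlength w :=
            wlength_dropUntil_le hw _ hs
        _ ≤ q.wlength w := ih
        _ ≤ (Walk.cons h q).wlength w := by rw [wlength_cons]; linarith [hw _ _ h]
    · rw [wlength_cons, wlength_cons]; linarith

lemma wlength_reverse (hsymm : ∀ a b : V, w a b = w b a) {x y : V} (p : G.Walk x y) :
    p.reverse.wlength w = p.wlength w := by
  unfold SimpleGraph.Walk.wlength
  rw [SimpleGraph.Walk.darts_reverse, List.map_reverse, List.sum_reverse, List.map_map]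
  congr 1
  apply List.map_congr_left
  intro d _
  simp [SimpleGraph.Dart.symm, hsymm]

lemma wdist_bddBelow (hw : ∀ a b : V, G.Adj a b → 0 ≤ w a b) (x y : V) :
    BddBelow {r : ℝ | ∃ p : G.Walk x y, p.wlength w = r} := by
  refine ⟨0, ?_⟩
  rintro r ⟨p, rfl⟩
  exact wlength_nonneg hw p

lemma wdist_le (hw : ∀ a b : V, G.Adj a b → 0 ≤ w a b) {x y : V} (p : G.Walk x y) :
    G.wdist w x y ≤ p.wlength w :=
  csInf_le (wdist_bddBelow hw x y) ⟨p, rfl⟩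

lemma wdist_nonneg (hw : ∀ a b : V, G.Adj a b → 0 ≤ w a b) (x y : V) :
    0 ≤ G.wdist w x y := by
  rcases Set.eq_empty_or_nonempty {r : ℝ | ∃ p : G.Walk x y, p.wlength w = r} with h | h
  · simp [SimpleGraph.wdist, h, Real.sInf_empty]
  · exact le_csInf h (by rintro r ⟨p, rfl⟩; exact wlength_nonneg hw p)

lemma wdist_self (hw : ∀ a b : V, G.Adj a b → 0 ≤ w a b) (x : V) :
    G.wdist w x x = 0 :=
  le_antisymm (by simpa [wlength_nil] using wdist_le hw (Walk.nil : G.Walk x x))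
    (wdist_nonneg hw x x)

/-- Existence of a shortest walk. -/
lemma exists_shortest [Fintype V] (hw : ∀ a b : V, G.Adj a b → 0 ≤ w a b) {x y : V}
    (h : G.Reachable x y) : ∃ p : G.Walk x y, p.wlength w = G.wdist w x y := by
  classical
  set T : Set ℝ :=
    Set.range (fun p : {p : G.Walk x y // p.IsPath ∧ p.length < Fintype.card V} =>
      p.1.wlength w) with hT
  have hTfin : T.Finite := Set.finite_range _
  obtain ⟨q0⟩ := h
  have hTne : T.Nonempty :=
    ⟨_, Set.mem_range_self ⟨q0.bypass, q0.bypass_isPath, q0.bypass_isPath.length_lt⟩⟩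
  obtain ⟨m, hmT, hmin⟩ := hTfin.exists_minimalFor id T hTne
  obtain ⟨⟨p, hp⟩, hpm⟩ := hmT
  refine ⟨p, le_antisymm ?_ (wdist_le hw p)⟩
  have hne : {r : ℝ | ∃ p : G.Walk x y, p.wlength w = r}.Nonempty := ⟨_, q0, rfl⟩
  apply le_csInf hne
  rintro r ⟨q, rfl⟩
  have hb : q.bypass.wlength w ∈ T :=
    Set.mem_range_self (f := fun p : {p : G.Walk x y // p.IsPath ∧ p.length < Fintype.card V} =>
      p.1.wlength w) ⟨q.bypass, q.bypass_isPath, q.bypass_isPath.length_lt⟩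
  have h1 : m ≤ q.bypass.wlength w := by
    rcases le_or_gt m (q.bypass.wlength w) with h | h
    · exact h
    · exact hmin hb h.le
  calc p.wlength w = m := hpm
    _ ≤ q.bypass.wlength w := h1
    _ ≤ q.wlength w := wlength_bypass_le hw q

lemma wdist_symm (hsymm : ∀ a b : V, w a b = w b a) (x y : V) :
    G.wdist w x y = G.wdist w y x := by
  unfold SimpleGraph.wdist
  congr 1
  ext r
  constructor
  · rintro ⟨p, rfl⟩; exact ⟨p.reverse, wlength_reverse hsymm p⟩
  · rintro ⟨p, rfl⟩; exact ⟨p.reverse, wlength_reverse hsymm p⟩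

lemma wdist_triangle [Fintype V] (hw : ∀ a b : V, G.Adj a b → 0 ≤ w a b)
    (hG : G.Connected) (x y z : V) :
    G.wdist w x z ≤ G.wdist w x y + G.wdist w y z := by
  obtain ⟨p, hp⟩ := exists_shortest hw (hG x y)
  obtain ⟨q, hq⟩ := exists_shortest hw (hG y z)
  calc G.wdist w x z ≤ (p.append q).wlength w := wdist_le hw _
    _ = p.wlength w + q.wlength w := wlength_append p q
    _ = _ := by rw [hp, hq]

lemma wdistS_bddBelow (hw : ∀ a b : V, G.Adj a b → 0 ≤ w a b) (x : V) (S : Set V) :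
    BddBelow (G.wdist w x '' S) := by
  refine ⟨0, ?_⟩
  rintro r ⟨z, _, rfl⟩
  exact wdist_nonneg hw x z

lemma wdistS_le (hw : ∀ a b : V, G.Adj a b → 0 ≤ w a b) {x z : V} {S : Set V} (hz : z ∈ S) :
    G.wdistS w x S ≤ G.wdist w x z :=
  csInf_le (wdistS_bddBelow hw x S) ⟨z, hz, rfl⟩

/-- Lift a walk whose support lies in `s` to the induced subgraph. -/
def Walk.toInduce {s : Set V} : ∀ {c d : V} (p : G.Walk c d)
    (h : ∀ y ∈ p.support, y ∈ s), (G.induce s).Walk ⟨c, h c p.start_mem_support⟩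
      ⟨d, h d p.end_mem_support⟩
  | _, _, Walk.nil, _ => Walk.nil
  | _, _, Walk.cons ha q, h =>
    Walk.cons (by simpa using ha)
      (Walk.toInduce q (fun y hy => h y (by simp [hy])))

lemma wlength_toInduce {s : Set V} : ∀ {c d : V} (p : G.Walk c d)
    (h : ∀ y ∈ p.support, y ∈ s),
    SimpleGraph.Walk.wlength (G := G.induce s) (fun a b => w (a : V) (b : V))
      (Walk.toInduce p h) = p.wlength w
  | _, _, Walk.nil, _ => rfl
  | _, _, Walk.cons ha q, h => by
    rw [show Walk.toInduce (Walk.cons ha q) h = Walk.cons (by simpa using ha)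
      (Walk.toInduce q (fun y hy => h y (by simp [hy]))) from rfl]
    rw [wlength_cons, wlength_cons, wlength_toInduce q _]

lemma wdist_le_induce_walk [Fintype V] (hw : ∀ a b : V, G.Adj a b → 0 ≤ w a b)
    (hG : G.Connected) {s : Set V} :
    ∀ {a b : s} (p : (G.induce s).Walk a b),
      G.wdist w (a : V) (b : V) ≤
        SimpleGraph.Walk.wlength (G := G.induce s) (fun a b => w (a : V) (b : V)) p := by
  intro a b p
  induction p with
  | nil => rw [wlength_nil, wdist_self hw]
  | @cons a c b ha q ih =>
    have hadj : G.Adj (a : V) (c : V) := by simpa using ha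
    simp only [wlength_cons]
    have htri : G.wdist w (a : V) (b : V) ≤
        G.wdist w (a : V) (c : V) + G.wdist w (c : V) (b : V) :=
      wdist_triangle hw hG _ _ _
    have hedge : G.wdist w (a : V) (c : V) ≤ w (a : V) (c : V) := by
      have := wdist_le hw (Walk.cons hadj (Walk.nil : G.Walk (c : V) (c : V)))
      rw [wlength_cons, wlength_nil, add_zero] at this
      exact this
    linarith

end Aux

/-- **Lemma 5.** Under conditions (1) and (2), for every `x ∈ V_i` the distance from
`v_i` to `x` inside the induced subgraph `G_i = G[V_i]` (with inherited weights) equals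
the distance from `v_i` to `x` in `G`. -/
theorem induced_Vset_distance {V : Type*} [Fintype V] (G : SimpleGraph V)
    (hG : G.Connected) (w : V → V → ℝ) (hsymm : ∀ a b : V, w a b = w b a)
    (hpos : ∀ a b : V, G.Adj a b → 0 < w a b) (u v : V)
    (P : G.Walk u v) (hP : P.IsPath) (hPshort : P.wlength w = G.wdist w u v)
    (hPuniq : ∀ Q : G.Walk u v, Q.IsPath → Q.wlength w = G.wdist w u v → Q = P)
    (hnear : ∀ x : V, ∃! y : V, y ∈ P.support ∧
      G.wdist w x y = G.wdistS w x {z | z ∈ P.support}) :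
    ∀ i : ℕ, i ≤ P.length → ∀ a b : (Vset G w P i), (a : V) = P.getVert i →
      (G.induce (Vset G w P i)).wdist (fun p q => w (p : V) (q : V)) a b =
        G.wdist w (P.getVert i) (b : V) := by
  classical
  intro i hi a b ha
  have hw : ∀ a b : V, G.Adj a b → 0 ≤ w a b := fun a b h => (hpos a b h).le
  obtain ⟨av, haV⟩ := a
  obtain ⟨bv, hbV⟩ := b
  have ha' : av = P.getVert i := ha
  subst ha'
  set vi := P.getVert i with hvi
  set s := Vset G w P i with hs
  have hvimem : vi ∈ {z | z ∈ P.support} :=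
    Walk.mem_support_iff_exists_getVert.mpr ⟨i, rfl, hi⟩
  -- shortest walk from vi to bv in G
  obtain ⟨Q, hQ⟩ := exists_shortest hw (hG vi bv)
  -- every vertex of Q lies in s
  have hsupp : ∀ y ∈ Q.support, y ∈ s := by
    intro y hy
    -- decompose Q at y
    have hdecomp : (Q.takeUntil y hy).wlength w + (Q.dropUntil y hy).wlength w
        = G.wdist w vi bv := by
      rw [← wlength_append, Q.take_spec hy, hQ]
    have h1 : G.wdist w vi y ≤ (Q.takeUntil y hy).wlength w := wdist_le hw _
    have h2 : G.wdist w y bv ≤ (Q.dropUntil y hy).wlength w := wdist_le hw _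
    have htri : G.wdist w vi bv ≤ G.wdist w vi y + G.wdist w y bv :=
      wdist_triangle hw hG _ _ _
    have hsum : G.wdist w vi y + G.wdist w y bv = G.wdist w vi bv := by linarith
    -- show wdist y vi ≤ wdist y z for all z on P
    have hkey : ∀ z ∈ P.support, G.wdist w y vi ≤ G.wdist w y z := by
      intro z hz
      have hb1 : G.wdist w bv vi ≤ G.wdist w bv z := by
        have := wdistS_le (G := G) (w := w) (x := bv) hw (show z ∈ {z | z ∈ P.support} from hz)
        rw [← hbV] at this
        exact this
      have hb2 : G.wdist w bv z ≤ G.wdist w bv y + G.wdist w y z :=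
        wdist_triangle hw hG _ _ _
      have e1 : G.wdist w bv vi = G.wdist w vi y + G.wdist w y bv := by
        rw [wdist_symm hsymm bv vi]; exact hsum.symm
      have e2 : G.wdist w bv y = G.wdist w y bv := wdist_symm hsymm bv y
      have e3 : G.wdist w y vi = G.wdist w vi y := wdist_symm hsymm y vi
      linarith
    -- conclude y ∈ Vset
    show G.wdist w y vi = G.wdistS w y {z | z ∈ P.support}
    refine le_antisymm ?_ (wdistS_le hw hvimem)
    have hne2 : (G.wdist w y '' {z | z ∈ P.support}).Nonempty := ⟨_, vi, hvimem, rfl⟩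
    apply le_csInf hne2
    rintro r ⟨z, hz, rfl⟩
    exact hkey z hz
  -- the lifted walk
  have hvis : vi ∈ s := hsupp vi Q.start_mem_support
  have hbvs : bv ∈ s := hsupp bv Q.end_mem_support
  set Q' := Walk.toInduce Q hsupp with hQ'
  have hQ'len : SimpleGraph.Walk.wlength (G := G.induce s)
      (fun p q => w (p : V) (q : V)) Q' = G.wdist w vi bv := by
    rw [hQ', wlength_toInduce, hQ]
  refine le_antisymm ?_ ?_
  · have hle := wdist_le (G := G.induce s) (w := fun p q => w (p : V) (q : V))
      (fun a b h => hw _ _ (by simpa using h)) Q'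
    rw [hQ'len] at hle
    exact hle
  · have hne3 : {r : ℝ | ∃ p : (G.induce s).Walk ⟨vi, haV⟩ ⟨bv, hbV⟩,
        SimpleGraph.Walk.wlength (G := G.induce s) (fun p q => w (p : V) (q : V)) p = r}.Nonempty :=
      ⟨_, Q', rfl⟩
    apply le_csInf hne3
    rintro r ⟨p, rfl⟩
    exact wdist_le_induce_walk hw hG p
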